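/- The motivic exponential Exp on ℤ[u,v]⟦t⟧ (defined by Exp(∑ f_n t^n) = ∏_{n,i,j}(1-u^i v^j t^n)^{-p^{(n)}_{ij}} where f_n = ∑ p^{(n)}_{ij}u^i v^j) is injective; equivalently, it is a group isomorphism from (t·ℤ[u,v]⟦t⟧, +) onto (1 + t·ℤ[u,v]⟦t⟧, ·). -/

import Mathlib

open PowerSeries

/-- The polynomial ring `ℤ[u,v]`. -/
abbrev P2 : Type := MvPolynomial (Fin 2) ℤ

/-- `f ^ p` for an integer exponent `p`. -/
noncomputable def rzpow {R : Type*} [CommRing R] (f : PowerSeries R) (p : ℤ) :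
    PowerSeries R :=
  f ^ p.toNat * (Ring.inverse f) ^ (-p).toNat

/-- The factor `∏_{i,j} (1 - u^i v^j t^n)^{-p_{ij}}` for `f = ∑ p_{ij} u^i v^j`. -/
noncomputable def expFactor (n : ℕ) (f : P2) : PowerSeries P2 :=
  ∏ d ∈ f.support,
    rzpow (1 - PowerSeries.C (MvPolynomial.monomial d 1) * X ^ n)
      (-(MvPolynomial.coeff d f))

/-- The motivic exponential
`Exp(∑_{n≥1} fₙ tⁿ) = ∏_{n≥1} ∏_{i,j} (1 - u^i v^j tⁿ)^{-p^{(n)}_{ij}}`, the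
infinite product taken in the t-adic topology (the factor with index `n` only
affects coefficients of `t^k` with `k ≥ n`). -/
noncomputable def Exp2 (A : PowerSeries P2) : PowerSeries P2 :=
  PowerSeries.mk fun k =>
    coeff k (∏ n ∈ Finset.Icc 1 k, expFactor n (coeff n A))

namespace Exp2Aux

/-- `g ≡ 1 mod t^n` (up to the constant term being exactly 1). -/
def IsOne (n : ℕ) (g : PowerSeries P2) : Prop :=
  constantCoeff g = 1 ∧ ∀ k, 0 < k → k < n → coeff k g = 0

lemma isOne_one (n : ℕ) : IsOne n 1 :=
  ⟨map_one _, fun k hk _ => by simp [coeff_one, Nat.pos_iff_ne_zero.mp hk]⟩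

/-- If all coefficients of `g` in degrees `1..k` vanish, the `k`-th coefficient of
`g*h` is `g₀ hₖ`. -/
lemma coeff_mul_left_vanish {g h : PowerSeries P2} {k : ℕ}
    (hg : ∀ i, 0 < i → i ≤ k → coeff i g = 0) :
    coeff k (g * h) = constantCoeff g * coeff k h := by
  rw [coeff_mul]
  rw [Finset.sum_eq_single_of_mem (0, k) (by simp)]
  · simp [coeff_zero_eq_constantCoeff]
  · rintro ⟨i, j⟩ hij hne
    simp only [Finset.HasAntidiagonal.mem_antidiagonal] at hij
    have hi : 0 < i := by
      rcases Nat.eq_zero_or_pos i with h0 | h0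
      · exact absurd (by simp [h0, ← hij]) hne
      · exact h0
    rw [hg i hi (by omega), zero_mul]

lemma coeff_mul_right_vanish {g h : PowerSeries P2} {k : ℕ}
    (hh : ∀ j, 0 < j → j ≤ k → coeff j h = 0) :
    coeff k (g * h) = coeff k g * constantCoeff h := by
  rw [mul_comm, coeff_mul_left_vanish hh, mul_comm]

lemma IsOne.mul {n : ℕ} {g h : PowerSeries P2} (hg : IsOne n g) (hh : IsOne n h) :
    IsOne n (g * h) := by
  refine ⟨by simp [map_mul, hg.1, hh.1], fun k hk hkn => ?_⟩
  rw [coeff_mul_left_vanish (fun i hi hik => hg.2 i hi (lt_of_le_of_lt hik hkn)),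
    hh.2 k hk hkn, mul_zero]

lemma IsOne.pow {n : ℕ} {g : PowerSeries P2} (hg : IsOne n g) (a : ℕ) :
    IsOne n (g ^ a) := by
  induction a with
  | zero => simpa using isOne_one n
  | succ a ih => rw [pow_succ]; exact ih.mul hg

lemma IsOne.prod {n : ℕ} {ι : Type*} {s : Finset ι} {g : ι → PowerSeries P2}
    (h : ∀ i ∈ s, IsOne n (g i)) : IsOne n (∏ i ∈ s, g i) := by
  classical
  induction s using Finset.cons_induction with
  | empty => simpa using isOne_one n
  | cons a s ha ih =>
    rw [Finset.prod_cons]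
    exact (h a (Finset.mem_cons_self a s)).mul
      (ih fun i hi => h i (Finset.mem_cons_of_mem hi))

lemma IsOne.isUnit {n : ℕ} {g : PowerSeries P2} (hg : IsOne n g) : IsUnit g := by
  rw [PowerSeries.isUnit_iff_constantCoeff, hg.1]; exact isUnit_one

lemma IsOne.inverse {n : ℕ} {g : PowerSeries P2} (hg : IsOne n g) :
    IsOne n (Ring.inverse g) := by
  have hmul : g * Ring.inverse g = 1 := Ring.mul_inverse_cancel g hg.isUnit
  have hc : constantCoeff (Ring.inverse g) = 1 := by
    have := congrArg (constantCoeff) hmul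
    simpa [map_mul, hg.1] using this
  refine ⟨hc, fun k hk hkn => ?_⟩
  have := congrArg (coeff k) hmul
  rw [coeff_mul_left_vanish (fun i hi hik => hg.2 i hi (lt_of_le_of_lt hik hkn)),
    hg.1, one_mul, coeff_one, if_neg (Nat.pos_iff_ne_zero.mp hk)] at this
  exact this

/-- The key two-term coefficient computation. -/
lemma coeff_mul_two_terms {n : ℕ} (hn : 0 < n) {g h : PowerSeries P2}
    (hg : ∀ i, 0 < i → i < n → coeff i g = 0) :
    coeff n (g * h) =
      constantCoeff g * coeff n h + coeff n g * constantCoeff h := by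
  rw [coeff_mul, Finset.Nat.sum_antidiagonal_eq_sum_range_succ_mk,
    Finset.sum_range_succ]
  congr 1
  · rw [Finset.sum_eq_single_of_mem 0 (Finset.mem_range.mpr hn)]
    · simp [coeff_zero_eq_constantCoeff]
    · intro i hi hne
      rw [hg i (Nat.pos_of_ne_zero hne) (Finset.mem_range.mp hi), zero_mul]
  · simp [coeff_zero_eq_constantCoeff]

lemma coeff_inverse {n : ℕ} (hn : 0 < n) {g : PowerSeries P2} (hg : IsOne n g) :
    coeff n (Ring.inverse g) = -coeff n g := by
  have hmul : g * Ring.inverse g = 1 := Ring.mul_inverse_cancel g hg.isUnit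
  have := congrArg (coeff n) hmul
  rw [coeff_mul_two_terms hn hg.2, hg.1, hg.inverse.1, one_mul, mul_one,
    coeff_one, if_neg (Nat.pos_iff_ne_zero.mp hn)] at this
  linear_combination this

lemma coeff_pow {n : ℕ} (hn : 0 < n) {g : PowerSeries P2} (hg : IsOne n g) (a : ℕ) :
    coeff n (g ^ a) = a • coeff n g := by
  induction a with
  | zero => simp [coeff_one, Nat.pos_iff_ne_zero.mp hn]
  | succ a ih =>
    rw [pow_succ, coeff_mul_two_terms hn (hg.pow a).2, (hg.pow a).1, hg.1, one_mul,
      mul_one, ih, succ_nsmul]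
    ring

lemma IsOne.rzpow {n : ℕ} {g : PowerSeries P2} (hg : IsOne n g) (p : ℤ) :
    IsOne n (rzpow g p) :=
  (hg.pow _).mul (hg.inverse.pow _)

lemma coeff_rzpow {n : ℕ} (hn : 0 < n) {g : PowerSeries P2} (hg : IsOne n g) (p : ℤ) :
    coeff n (rzpow g p) = p • coeff n g := by
  rw [rzpow, coeff_mul_two_terms hn (hg.pow _).2, (hg.pow _).1,
    (hg.inverse.pow _).1, one_mul, mul_one, coeff_pow hn hg,
    coeff_pow hn hg.inverse, coeff_inverse hn hg, smul_neg, neg_add_eq_sub,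
    ← natCast_zsmul (coeff n g) p.toNat, ← natCast_zsmul (coeff n g) (-p).toNat,
    ← sub_smul, Int.toNat_sub_toNat_neg]

lemma isOne_oneSub {n : ℕ} (hn : 0 < n) (m : P2) :
    IsOne n (1 - PowerSeries.C m * X ^ n) := by
  constructor
  · simp [map_sub, map_mul, map_pow, constantCoeff_X,
      zero_pow (Nat.pos_iff_ne_zero.mp hn)]
  · intro k hk hkn
    simp [coeff_one, coeff_X_pow, Nat.pos_iff_ne_zero.mp hk, Nat.ne_of_lt hkn]

lemma coeff_oneSub {n : ℕ} (hn : 0 < n) (m : P2) :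
    coeff n (1 - PowerSeries.C m * X ^ n) = -m := by
  simp [coeff_one, coeff_X_pow, Nat.pos_iff_ne_zero.mp hn]


lemma isOne_expFactor {n : ℕ} (hn : 0 < n) (f : P2) : IsOne n (expFactor n f) :=
  IsOne.prod fun d _ => (isOne_oneSub hn _).rzpow _

lemma coeff_prod {n : ℕ} (hn : 0 < n) {ι : Type*} {s : Finset ι}
    {g : ι → PowerSeries P2} (h : ∀ i ∈ s, IsOne n (g i)) :
    coeff n (∏ i ∈ s, g i) = ∑ i ∈ s, coeff n (g i) := by
  classical
  induction s using Finset.cons_induction with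
  | empty => simp [coeff_one, Nat.pos_iff_ne_zero.mp hn]
  | cons a s ha ih =>
    have hs : IsOne n (∏ i ∈ s, g i) :=
      IsOne.prod fun i hi => h i (Finset.mem_cons_of_mem hi)
    rw [Finset.prod_cons, Finset.sum_cons,
      coeff_mul_two_terms hn (h a (Finset.mem_cons_self a s)).2,
      (h a (Finset.mem_cons_self a s)).1, hs.1, one_mul, mul_one,
      ih fun i hi => h i (Finset.mem_cons_of_mem hi), add_comm]

lemma coeff_expFactor {n : ℕ} (hn : 0 < n) (f : P2) :
    coeff n (expFactor n f) = f := by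
  rw [expFactor, coeff_prod hn (fun d _ => (isOne_oneSub hn _).rzpow _)]
  have : ∀ d ∈ f.support,
      coeff n (rzpow (1 - PowerSeries.C (MvPolynomial.monomial d 1) * X ^ n)
        (-(MvPolynomial.coeff d f))) = MvPolynomial.monomial d (MvPolynomial.coeff d f) := by
    intro d _
    rw [coeff_rzpow hn (isOne_oneSub hn _), coeff_oneSub hn, smul_neg, neg_smul,
      neg_neg, MvPolynomial.smul_monomial, smul_eq_mul, mul_one]
  rw [Finset.sum_congr rfl this, MvPolynomial.support_sum_monomial_coeff]

lemma rzpow_zero {R : Type*} [CommRing R] (g : PowerSeries R) : rzpow g 0 = 1 := by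
  simp [rzpow]

lemma pow_mul_inv_pow {g : PowerSeries P2} (hu : IsUnit g) {a b a' b' : ℕ}
    (h : a + b' = a' + b) :
    g ^ a * (Ring.inverse g) ^ b = g ^ a' * (Ring.inverse g) ^ b' := by
  have key : ∀ c : ℕ, (Ring.inverse g) ^ c * g ^ c = 1 := fun c => by
    rw [← mul_pow, Ring.inverse_mul_cancel g hu, one_pow]
  refine IsUnit.mul_right_cancel (hu.pow (b + b')) ?_
  calc g ^ a * (Ring.inverse g) ^ b * g ^ (b + b')
      = g ^ (a + b') * ((Ring.inverse g) ^ b * g ^ b) := by rw [pow_add, pow_add]; ring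
    _ = g ^ (a' + b) * ((Ring.inverse g) ^ b' * g ^ b') := by rw [key, key, h]
    _ = g ^ a' * (Ring.inverse g) ^ b' * g ^ (b + b') := by rw [pow_add, pow_add]; ring

lemma rzpow_add {g : PowerSeries P2} (hu : IsUnit g) (p q : ℤ) :
    rzpow g (p + q) = rzpow g p * rzpow g q := by
  have h : (p + q).toNat + ((-p).toNat + (-q).toNat)
      = (p.toNat + q.toNat) + (-(p + q)).toNat := by omega
  rw [rzpow, rzpow, rzpow, pow_mul_inv_pow hu h, pow_add, pow_add]
  ring

lemma expFactor_add {n : ℕ} (hn : 0 < n) (f g : P2) :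
    expFactor n (f + g) = expFactor n f * expFactor n g := by
  classical
  set u : (Fin 2 →₀ ℕ) → PowerSeries P2 := fun d =>
    1 - PowerSeries.C (MvPolynomial.monomial d 1) * X ^ n with hu
  have hunit : ∀ d, IsUnit (u d) := fun d => (isOne_oneSub hn _).isUnit
  set s : Finset (Fin 2 →₀ ℕ) := f.support ∪ g.support with hs
  have key : ∀ h : P2, h.support ⊆ s →
      expFactor n h = ∏ d ∈ s, rzpow (u d) (-(MvPolynomial.coeff d h)) := by
    intro h hsub
    rw [expFactor]
    refine Finset.prod_subset hsub fun d _ hd => ?_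
    rw [MvPolynomial.notMem_support_iff.mp hd, neg_zero, rzpow_zero]
  rw [key f Finset.subset_union_left, key g Finset.subset_union_right,
    key (f + g) (MvPolynomial.support_add.trans (by rfl)),
    ← Finset.prod_mul_distrib]
  refine Finset.prod_congr rfl fun d _ => ?_
  rw [MvPolynomial.coeff_add, neg_add, rzpow_add (hunit d)]

/-- The truncated product appearing in `Exp2`. -/
noncomputable def G (A : PowerSeries P2) (k : ℕ) : PowerSeries P2 :=
  ∏ n ∈ Finset.Icc 1 k, expFactor n (coeff n A)

lemma coeff_Exp2_eq (A : PowerSeries P2) (k : ℕ) :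
    coeff k (Exp2 A) = coeff k (G A k) := by
  rw [Exp2, coeff_mk, G]

lemma IsOne.mono {m n : ℕ} (h : m ≤ n) {g : PowerSeries P2} (hg : IsOne n g) :
    IsOne m g :=
  ⟨hg.1, fun k hk hkm => hg.2 k hk (lt_of_lt_of_le hkm h)⟩

lemma constantCoeff_G (A : PowerSeries P2) (k : ℕ) : constantCoeff (G A k) = 1 := by
  have h : IsOne 1 (G A k) := by
    apply IsOne.prod
    intro n hn
    have hn1 : 0 < n := (Finset.mem_Icc.mp hn).1
    exact (isOne_expFactor hn1 _).mono hn1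
  exact h.1

lemma coeff_G_stable (A : PowerSeries P2) {i k : ℕ} (h : i ≤ k) :
    coeff i (G A k) = coeff i (G A i) := by
  induction k with
  | zero => rw [Nat.le_zero.mp h]
  | succ k ih =>
    rcases Nat.lt_or_ge i (k + 1) with hlt | hge
    · have hik : i ≤ k := by omega
      rw [G, Finset.prod_Icc_succ_top (by omega), ← G,
        coeff_mul_right_vanish (fun j hj hji =>
          (isOne_expFactor (by omega) _).2 j hj (by omega)),
        (isOne_expFactor (n := k + 1) (by omega) _).1, mul_one, ih hik]
    · have : i = k + 1 := by omega
      rw [this]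

lemma coeff_Exp2 (A : PowerSeries P2) {k : ℕ} (hk : 0 < k) :
    coeff k (Exp2 A) = coeff k A + coeff k (G A (k - 1)) := by
  obtain ⟨m, rfl⟩ : ∃ m, k = m + 1 := ⟨k - 1, by omega⟩
  rw [coeff_Exp2_eq, G, Finset.prod_Icc_succ_top (by omega), ← G, mul_comm,
    coeff_mul_two_terms hk (isOne_expFactor hk _).2,
    (isOne_expFactor hk _).1, one_mul, coeff_expFactor hk, constantCoeff_G,
    mul_one, Nat.add_sub_cancel, add_comm]

lemma constantCoeff_Exp2 (A : PowerSeries P2) : constantCoeff (Exp2 A) = 1 := by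
  have h0 : G A 0 = 1 := by
    rw [G, Finset.Icc_eq_empty (by omega), Finset.prod_empty]
  rw [← coeff_zero_eq_constantCoeff, coeff_Exp2_eq, h0, coeff_zero_eq_constantCoeff,
    map_one]

end Exp2Aux

namespace Exp2Aux

/-- The recursively defined preimage coefficients for surjectivity. -/
noncomputable def recA (B : PowerSeries P2) : ℕ → P2
  | n =>
    coeff n B -
      coeff n (∏ m ∈ (Finset.Icc 1 (n - 1)).attach,
        expFactor m.1 (recA B m.1))
  decreasing_by
    have := Finset.mem_Icc.mp m.2
    omega

lemma recA_spec (B : PowerSeries P2) (n : ℕ) :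
    recA B n = coeff n B -
      coeff n (∏ m ∈ Finset.Icc 1 (n - 1), expFactor m (recA B m)) := by
  conv_lhs => rw [recA]
  rw [Finset.prod_attach (Finset.Icc 1 (n - 1)) (fun m => expFactor m (recA B m))]

end Exp2Aux

open Exp2Aux

/-- The motivic exponential on `ℤ[u,v]⟦t⟧` is injective; equivalently it is a
group isomorphism from `(t·ℤ[u,v]⟦t⟧, +)` onto `(1 + t·ℤ[u,v]⟦t⟧, ·)`. -/
theorem Exp2_injective_group_iso :
    (∀ A B : PowerSeries P2, constantCoeff A = 0 → constantCoeff B = 0 →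
      Exp2 A = Exp2 B → A = B) ∧
    (∀ A B : PowerSeries P2, constantCoeff A = 0 → constantCoeff B = 0 →
      Exp2 (A + B) = Exp2 A * Exp2 B) ∧
    (∀ B : PowerSeries P2, constantCoeff B = 1 →
      ∃ A : PowerSeries P2, constantCoeff A = 0 ∧ Exp2 A = B) := by
  refine ⟨?_, ?_, ?_⟩
  · -- injectivity
    intro A B hA hB hE
    refine PowerSeries.ext fun k => ?_
    induction k using Nat.strong_induction_on with
    | _ k ih =>
      rcases Nat.eq_zero_or_pos k with rfl | hk
      · simp only [coeff_zero_eq_constantCoeff, hA, hB]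
      · have hGe : G A (k - 1) = G B (k - 1) := by
          unfold G
          refine Finset.prod_congr rfl fun n hn => ?_
          have := Finset.mem_Icc.mp hn
          rw [ih n (by omega)]
        have hco := congrArg (coeff k) hE
        rw [coeff_Exp2 A hk, coeff_Exp2 B hk, hGe] at hco
        exact add_right_cancel hco
  · -- additivity
    intro A B hA hB
    refine PowerSeries.ext fun k => ?_
    have hL : coeff k (Exp2 (A + B)) = coeff k (G A k * G B k) := by
      rw [coeff_Exp2_eq]
      congr 1
      unfold G
      rw [← Finset.prod_mul_distrib]
      refine Finset.prod_congr rfl fun n hn => ?_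
      have hn1 : 0 < n := (Finset.mem_Icc.mp hn).1
      rw [map_add, expFactor_add hn1]
    rw [hL, coeff_mul, coeff_mul]
    refine Finset.sum_congr rfl fun p hp => ?_
    have hpk := Finset.HasAntidiagonal.mem_antidiagonal.mp hp
    rw [coeff_G_stable A (show p.1 ≤ k by omega),
      coeff_G_stable B (show p.2 ≤ k by omega), ← coeff_Exp2_eq, ← coeff_Exp2_eq]
  · -- surjectivity
    intro B hB
    refine ⟨PowerSeries.mk (recA B), ?_, ?_⟩
    · rw [← coeff_zero_eq_constantCoeff, coeff_mk, recA_spec,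
        Finset.Icc_eq_empty (by omega), Finset.prod_empty]
      simp [hB]
    · refine PowerSeries.ext fun k => ?_
      rcases Nat.eq_zero_or_pos k with rfl | hk
      · rw [coeff_zero_eq_constantCoeff, constantCoeff_Exp2, hB]
      · have hGe : G (PowerSeries.mk (recA B)) (k - 1)
            = ∏ m ∈ Finset.Icc 1 (k - 1), expFactor m (recA B m) := by
          unfold G
          exact Finset.prod_congr rfl fun n _ => by rw [coeff_mk]
        rw [coeff_Exp2 _ hk, coeff_mk, hGe, recA_spec, sub_add_cancel]
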